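/- arXiv:2007.03193 — 2 statements merged into one kernel-verified Lean document; each statement's English description precedes it below -/
import Mathlib

section
/- Fix an integer t⋆ ≥ 0, p ∈ (0,1), and m ∈ {0,1,…,t⋆}. Define b(t) := ∑_{x=0}^{⌊(t−1)/(t⋆+1)⌋} C(t−(m+1)−x·t⋆, x) · 1[t−(m+1)−x(t⋆+1) ≥ 0] · p^{x+1} · (1−p)^{t−(m+1)−x(t⋆+1)}. Then b(t) → p/(1 + t⋆·p) as t → ∞; in particular the limit is independent of m. -/
open Finset Filter

noncomputable def Sfun (tstar : ℕ) (p : ℝ) (n : ℕ) : ℝ :=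
  ∑ x ∈ Finset.range (n / (tstar + 1) + 1),
    ((n - x * tstar).choose x : ℝ) * p ^ x * (1 - p) ^ (n - x * (tstar + 1))

lemma Sfun_init (tstar : ℕ) (p : ℝ) (k : ℕ) (hk : k ≤ tstar) :
    Sfun tstar p k = (1 - p) ^ k := by
  have h : k / (tstar + 1) = 0 := Nat.div_eq_of_lt (by omega)
  simp [Sfun, h]

lemma Sfun_rec (tstar : ℕ) (p : ℝ) (n : ℕ) :
    Sfun tstar p (n + tstar + 1) =
      (1 - p) * Sfun tstar p (n + tstar) + p * Sfun tstar p n := by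
  have hT : 0 < tstar + 1 := Nat.succ_pos _
  have hNT : n + tstar + 1 = n + (tstar + 1) := by omega
  have hK : (n + (tstar + 1)) / (tstar + 1) = n / (tstar + 1) + 1 :=
    Nat.add_div_right n hT
  rw [hNT, Sfun, hK, Finset.sum_range_succ']
  have step : ∀ x ∈ Finset.range (n / (tstar + 1) + 1),
      ((n + (tstar + 1) - (x + 1) * tstar).choose (x + 1) : ℝ) * p ^ (x + 1)
          * (1 - p) ^ (n + (tstar + 1) - (x + 1) * (tstar + 1))
        = (1 - p) * (((n + tstar - (x + 1) * tstar).choose (x + 1) : ℝ) * p ^ (x + 1)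
              * (1 - p) ^ (n + tstar - (x + 1) * (tstar + 1)))
          + p * (((n - x * tstar).choose x : ℝ) * p ^ x * (1 - p) ^ (n - x * (tstar + 1))) := by
    intro x hx
    rw [Finset.mem_range] at hx
    have hxle : x * (tstar + 1) ≤ n := by
      have := (Nat.le_div_iff_mul_le hT).mp (Nat.lt_succ_iff.mp hx)
      exact this
    have e1 : x * (tstar + 1) = x * tstar + x := by ring
    have e2 : (x + 1) * tstar = x * tstar + tstar := by ring
    have e3 : (x + 1) * (tstar + 1) = x * tstar + x + tstar + 1 := by ring
    have hchoose : n + (tstar + 1) - (x + 1) * tstar = (n - x * tstar) + 1 := by omega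
    have hchoose2 : n + tstar - (x + 1) * tstar = n - x * tstar := by omega
    rw [hchoose, hchoose2, Nat.choose_succ_succ' (n - x * tstar) x]
    push_cast
    rcases eq_or_lt_of_le hxle with heq | hlt
    · -- x*(tstar+1) = n : the "A" choose is C(x, x+1) = 0
      have hxx : n - x * tstar = x := by omega
      have hz : (x).choose (x + 1) = 0 := Nat.choose_eq_zero_of_lt (by omega)
      have hexp1 : n + (tstar + 1) - (x + 1) * (tstar + 1) = 0 := by omega
      have hexp2 : n - x * (tstar + 1) = 0 := by omega
      rw [hxx, hz, hexp1, hexp2]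
      push_cast
      ring
    · -- x*(tstar+1) < n
      have hexp1 : n + (tstar + 1) - (x + 1) * (tstar + 1) = (n - x * (tstar + 1)) := by omega
      have hexp2 : n + tstar - (x + 1) * (tstar + 1) + 1 = n - x * (tstar + 1) := by omega
      rw [hexp1, ← hexp2, pow_succ]
      ring
  rw [Finset.sum_congr rfl step, Finset.sum_add_distrib, ← Finset.mul_sum, ← Finset.mul_sum]
  rw [Sfun, Sfun]
  have hpeel : ∑ x ∈ Finset.range ((n + tstar) / (tstar + 1) + 1),
        (((n + tstar - x * tstar).choose x : ℝ) * p ^ x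
          * (1 - p) ^ (n + tstar - x * (tstar + 1)))
      = ∑ x ∈ Finset.range ((n + tstar) / (tstar + 1)),
          (((n + tstar - (x + 1) * tstar).choose (x + 1) : ℝ) * p ^ (x + 1)
            * (1 - p) ^ (n + tstar - (x + 1) * (tstar + 1)))
        + ((n + tstar - 0 * tstar).choose 0 : ℝ) * p ^ 0
            * (1 - p) ^ (n + tstar - 0 * (tstar + 1)) :=
    Finset.sum_range_succ' _ _
  rw [hpeel]
  have hsums : ∑ x ∈ Finset.range (n / (tstar + 1) + 1),
        (((n + tstar - (x + 1) * tstar).choose (x + 1) : ℝ) * p ^ (x + 1)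
          * (1 - p) ^ (n + tstar - (x + 1) * (tstar + 1)))
      = ∑ x ∈ Finset.range ((n + tstar) / (tstar + 1)),
        (((n + tstar - (x + 1) * tstar).choose (x + 1) : ℝ) * p ^ (x + 1)
          * (1 - p) ^ (n + tstar - (x + 1) * (tstar + 1))) := by
    have h1 : n / (tstar + 1) ≤ (n + tstar) / (tstar + 1) :=
      Nat.div_le_div_right (by omega)
    have h2 : (n + tstar) / (tstar + 1) ≤ n / (tstar + 1) + 1 := by
      rw [← hK]
      exact Nat.div_le_div_right (by omega)
    rcases (by omega : (n + tstar) / (tstar + 1) = n / (tstar + 1)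
        ∨ (n + tstar) / (tstar + 1) = n / (tstar + 1) + 1) with hc | hc
    · rw [hc, Finset.sum_range_succ]
      have hd1 : (tstar + 1) * (n / (tstar + 1)) + n % (tstar + 1) = n :=
        Nat.div_add_mod n (tstar + 1)
      have hd2 : (tstar + 1) * ((n + tstar) / (tstar + 1)) + (n + tstar) % (tstar + 1)
          = n + tstar := Nat.div_add_mod (n + tstar) (tstar + 1)
      have hm1 : n % (tstar + 1) < tstar + 1 := Nat.mod_lt _ hT
      have hm2 : (n + tstar) % (tstar + 1) < tstar + 1 := Nat.mod_lt _ hT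
      rw [hc] at hd2
      obtain ⟨d, hd⟩ : ∃ d, n / (tstar + 1) = d := ⟨_, rfl⟩
      obtain ⟨r, hr⟩ : ∃ r, n % (tstar + 1) = r := ⟨_, rfl⟩
      obtain ⟨r', hr'⟩ : ∃ r', (n + tstar) % (tstar + 1) = r' := ⟨_, rfl⟩
      rw [hd, hr] at hd1
      rw [hd, hr'] at hd2
      rw [hr] at hm1
      rw [hr'] at hm2
      have e4 : (tstar + 1) * d = d * tstar + d := by ring
      have e5 : (d + 1) * tstar = d * tstar + tstar := by ring
      rw [e4] at hd1 hd2
      have hzero : n + tstar - (d + 1) * tstar = d := by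
        rw [e5]
        generalize d * tstar = B at hd1 hd2 ⊢
        omega
      rw [hd, hzero, Nat.choose_eq_zero_of_lt (Nat.lt_succ_self _)]
      push_cast
      ring
    · rw [hc]
  rw [hsums]
  simp only [Nat.choose_zero_right, pow_zero, Nat.zero_mul, Nat.sub_zero, Nat.cast_one]
  rw [show n + (tstar + 1) = (n + tstar) + 1 from rfl, pow_succ]
  ring

section Conv

variable (tstar : ℕ) (p : ℝ)

noncomputable def Mw (n : ℕ) : ℝ :=
  (Finset.range (tstar + 1)).sup' (Finset.nonempty_range_iff.mpr (Nat.succ_ne_zero _))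
    (fun k => Sfun tstar p (n + k))

noncomputable def mw (n : ℕ) : ℝ :=
  (Finset.range (tstar + 1)).inf' (Finset.nonempty_range_iff.mpr (Nat.succ_ne_zero _))
    (fun k => Sfun tstar p (n + k))

lemma le_Mw (n k : ℕ) (hk : k ≤ tstar) : Sfun tstar p (n + k) ≤ Mw tstar p n :=
  Finset.le_sup' (fun k => Sfun tstar p (n + k)) (Finset.mem_range.mpr (by omega : k < tstar + 1))

lemma mw_le (n k : ℕ) (hk : k ≤ tstar) : mw tstar p n ≤ Sfun tstar p (n + k) :=
  Finset.inf'_le (fun k => Sfun tstar p (n + k)) (Finset.mem_range.mpr (by omega : k < tstar + 1))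

lemma S_le_Mw (n : ℕ) : Sfun tstar p n ≤ Mw tstar p n := by
  simpa using le_Mw tstar p n 0 (Nat.zero_le _)

lemma mw_le_S (n : ℕ) : mw tstar p n ≤ Sfun tstar p n := by
  simpa using mw_le tstar p n 0 (Nat.zero_le _)

lemma mw_le_Mw (n : ℕ) : mw tstar p n ≤ Mw tstar p n :=
  le_trans (mw_le_S tstar p n) (S_le_Mw tstar p n)

variable (hp0 : 0 < p) (hp1 : p < 1)
include hp0 hp1

lemma keyUB (n j : ℕ) (hj : j ≤ tstar) :
    Sfun tstar p (n + tstar + j + 1) ≤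
      (1 - p * (1 - p) ^ j) * Mw tstar p n + p * (1 - p) ^ j * Sfun tstar p n := by
  induction j with
  | zero =>
      have h1 : Sfun tstar p (n + tstar + 0 + 1)
          = (1 - p) * Sfun tstar p (n + tstar) + p * Sfun tstar p n := Sfun_rec _ _ _
      rw [h1]
      have h2 : Sfun tstar p (n + tstar) ≤ Mw tstar p n := le_Mw tstar p n tstar le_rfl
      nlinarith [h2]
  | succ j ih =>
      have hj' : j ≤ tstar := by omega
      have hIH := ih hj'
      have h1 : Sfun tstar p (n + tstar + (j + 1) + 1)
          = (1 - p) * Sfun tstar p (n + tstar + j + 1) + p * Sfun tstar p (n + (j + 1)) := by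
        rw [show n + tstar + (j + 1) + 1 = (n + (j + 1)) + tstar + 1 by ring]
        rw [show n + tstar + j + 1 = (n + (j + 1)) + tstar by ring]
        exact Sfun_rec _ _ _
      have h2 : Sfun tstar p (n + (j + 1)) ≤ Mw tstar p n := le_Mw tstar p n (j + 1) (by omega)
      rw [h1]
      have hq : (0:ℝ) ≤ 1 - p := by linarith
      calc (1 - p) * Sfun tstar p (n + tstar + j + 1) + p * Sfun tstar p (n + (j + 1))
          ≤ (1 - p) * ((1 - p * (1 - p) ^ j) * Mw tstar p n
              + p * (1 - p) ^ j * Sfun tstar p n) + p * Mw tstar p n := by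
            exact add_le_add (mul_le_mul_of_nonneg_left hIH hq)
              (mul_le_mul_of_nonneg_left h2 hp0.le)
        _ = (1 - p * (1 - p) ^ (j + 1)) * Mw tstar p n
              + p * (1 - p) ^ (j + 1) * Sfun tstar p n := by
            rw [pow_succ]; ring

lemma keyLB (n j : ℕ) (hj : j ≤ tstar) :
    (1 - p * (1 - p) ^ j) * mw tstar p n + p * (1 - p) ^ j * Sfun tstar p n ≤
      Sfun tstar p (n + tstar + j + 1) := by
  induction j with
  | zero =>
      have h1 : Sfun tstar p (n + tstar + 0 + 1)
          = (1 - p) * Sfun tstar p (n + tstar) + p * Sfun tstar p n := Sfun_rec _ _ _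
      rw [h1]
      have h2 : mw tstar p n ≤ Sfun tstar p (n + tstar) := mw_le tstar p n tstar le_rfl
      nlinarith [h2]
  | succ j ih =>
      have hj' : j ≤ tstar := by omega
      have hIH := ih hj'
      have h1 : Sfun tstar p (n + tstar + (j + 1) + 1)
          = (1 - p) * Sfun tstar p (n + tstar + j + 1) + p * Sfun tstar p (n + (j + 1)) := by
        rw [show n + tstar + (j + 1) + 1 = (n + (j + 1)) + tstar + 1 by ring]
        rw [show n + tstar + j + 1 = (n + (j + 1)) + tstar by ring]
        exact Sfun_rec _ _ _
      have h2 : mw tstar p n ≤ Sfun tstar p (n + (j + 1)) := mw_le tstar p n (j + 1) (by omega)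
      rw [h1]
      have hq : (0:ℝ) ≤ 1 - p := by linarith
      calc (1 - p * (1 - p) ^ (j + 1)) * mw tstar p n
              + p * (1 - p) ^ (j + 1) * Sfun tstar p n
          = (1 - p) * ((1 - p * (1 - p) ^ j) * mw tstar p n
              + p * (1 - p) ^ j * Sfun tstar p n) + p * mw tstar p n := by
            rw [pow_succ]; ring
        _ ≤ (1 - p) * Sfun tstar p (n + tstar + j + 1) + p * Sfun tstar p (n + (j + 1)) := by
            exact add_le_add (mul_le_mul_of_nonneg_left hIH hq)
              (mul_le_mul_of_nonneg_left h2 hp0.le)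

end Conv

section Conv2

variable (tstar : ℕ) (p : ℝ) (hp0 : 0 < p) (hp1 : p < 1)
include hp0 hp1

lemma Mw_contract (n : ℕ) :
    Mw tstar p (n + (tstar + 1)) ≤
      Mw tstar p n - p * (1 - p) ^ tstar * (Mw tstar p n - Sfun tstar p n) := by
  apply Finset.sup'_le
  intro k hk
  rw [Finset.mem_range] at hk
  have hk' : k ≤ tstar := by omega
  have h1 : n + (tstar + 1) + k = n + tstar + k + 1 := by ring
  rw [h1]
  have h2 := keyUB tstar p hp0 hp1 n k hk'
  have hq0 : (0:ℝ) ≤ 1 - p := by linarith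
  have hq1 : (1:ℝ) - p ≤ 1 := by linarith
  have hpow : (1 - p) ^ tstar ≤ (1 - p) ^ k := pow_le_pow_of_le_one hq0 hq1 hk'
  have hMS : 0 ≤ Mw tstar p n - Sfun tstar p n := by linarith [S_le_Mw tstar p n]
  nlinarith [mul_le_mul_of_nonneg_right (mul_le_mul_of_nonneg_left hpow hp0.le) hMS]

lemma mw_contract (n : ℕ) :
    mw tstar p n + p * (1 - p) ^ tstar * (Sfun tstar p n - mw tstar p n) ≤
      mw tstar p (n + (tstar + 1)) := by
  apply Finset.le_inf'
  intro k hk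
  rw [Finset.mem_range] at hk
  have hk' : k ≤ tstar := by omega
  have h1 : n + (tstar + 1) + k = n + tstar + k + 1 := by ring
  rw [h1]
  have h2 := keyLB tstar p hp0 hp1 n k hk'
  have hq0 : (0:ℝ) ≤ 1 - p := by linarith
  have hq1 : (1:ℝ) - p ≤ 1 := by linarith
  have hpow : (1 - p) ^ tstar ≤ (1 - p) ^ k := pow_le_pow_of_le_one hq0 hq1 hk'
  have hMS : 0 ≤ Sfun tstar p n - mw tstar p n := by linarith [mw_le_S tstar p n]
  nlinarith [mul_le_mul_of_nonneg_right (mul_le_mul_of_nonneg_left hpow hp0.le) hMS]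

lemma Mw_succ_le (n : ℕ) : Mw tstar p (n + 1) ≤ Mw tstar p n := by
  apply Finset.sup'_le
  intro k hk
  rw [Finset.mem_range] at hk
  rcases (by omega : k < tstar ∨ k = tstar) with hlt | heq
  · have h1 : n + 1 + k = n + (k + 1) := by ring
    rw [h1]
    exact le_Mw tstar p n (k + 1) (by omega)
  · rw [heq]
    have h1 : n + 1 + tstar = n + tstar + 0 + 1 := by ring
    rw [h1]
    have h2 := keyUB tstar p hp0 hp1 n 0 (Nat.zero_le _)
    have h3 := S_le_Mw tstar p n
    simp only [pow_zero] at h2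
    nlinarith

lemma mw_le_succ (n : ℕ) : mw tstar p n ≤ mw tstar p (n + 1) := by
  apply Finset.le_inf'
  intro k hk
  rw [Finset.mem_range] at hk
  rcases (by omega : k < tstar ∨ k = tstar) with hlt | heq
  · have h1 : n + 1 + k = n + (k + 1) := by ring
    rw [h1]
    exact mw_le tstar p n (k + 1) (by omega)
  · rw [heq]
    have h1 : n + 1 + tstar = n + tstar + 0 + 1 := by ring
    rw [h1]
    have h2 := keyLB tstar p hp0 hp1 n 0 (Nat.zero_le _)
    have h3 := mw_le_S tstar p n
    simp only [pow_zero] at h2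
    nlinarith

lemma Mw_antitone : Antitone (Mw tstar p) :=
  antitone_nat_of_succ_le (Mw_succ_le tstar p hp0 hp1)

lemma mw_monotone : Monotone (mw tstar p) :=
  monotone_nat_of_le_succ (mw_le_succ tstar p hp0 hp1)

lemma Dw_pow (k : ℕ) :
    Mw tstar p (k * (tstar + 1)) - mw tstar p (k * (tstar + 1)) ≤
      (1 - p * (1 - p) ^ tstar) ^ k * (Mw tstar p 0 - mw tstar p 0) := by
  have hq0 : (0:ℝ) < 1 - p := by linarith
  have hc0 : 0 < p * (1 - p) ^ tstar := by positivity
  have hc1 : p * (1 - p) ^ tstar ≤ 1 := by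
    have h1 : (1 - p) ^ tstar ≤ 1 := pow_le_one₀ hq0.le (by linarith)
    nlinarith
  induction k with
  | zero => simp
  | succ k ih =>
      have h1 : (k + 1) * (tstar + 1) = k * (tstar + 1) + (tstar + 1) := by ring
      rw [h1]
      have h2 := Mw_contract tstar p hp0 hp1 (k * (tstar + 1))
      have h3 := mw_contract tstar p hp0 hp1 (k * (tstar + 1))
      have h4 : Mw tstar p (k * (tstar + 1) + (tstar + 1))
            - mw tstar p (k * (tstar + 1) + (tstar + 1))
          ≤ (1 - p * (1 - p) ^ tstar)
            * (Mw tstar p (k * (tstar + 1)) - mw tstar p (k * (tstar + 1))) := by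
        nlinarith
      calc Mw tstar p (k * (tstar + 1) + (tstar + 1))
            - mw tstar p (k * (tstar + 1) + (tstar + 1))
          ≤ (1 - p * (1 - p) ^ tstar)
            * (Mw tstar p (k * (tstar + 1)) - mw tstar p (k * (tstar + 1))) := h4
        _ ≤ (1 - p * (1 - p) ^ tstar)
            * ((1 - p * (1 - p) ^ tstar) ^ k * (Mw tstar p 0 - mw tstar p 0)) :=
            mul_le_mul_of_nonneg_left ih (by linarith)
        _ = (1 - p * (1 - p) ^ tstar) ^ (k + 1) * (Mw tstar p 0 - mw tstar p 0) := by
            rw [pow_succ]; ring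

lemma Dw_le (n : ℕ) :
    Mw tstar p n - mw tstar p n ≤
      (1 - p * (1 - p) ^ tstar) ^ (n / (tstar + 1)) * (Mw tstar p 0 - mw tstar p 0) := by
  have h1 : n / (tstar + 1) * (tstar + 1) ≤ n := Nat.div_mul_le_self n (tstar + 1)
  have h2 := Mw_antitone tstar p hp0 hp1 h1
  have h3 := mw_monotone tstar p hp0 hp1 h1
  have h4 := Dw_pow tstar p hp0 hp1 (n / (tstar + 1))
  linarith

lemma Dw_tendsto :
    Tendsto (fun n => Mw tstar p n - mw tstar p n) atTop (nhds 0) := by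
  have hq0 : (0:ℝ) < 1 - p := by linarith
  have hc0 : 0 < p * (1 - p) ^ tstar := by positivity
  have hc1 : p * (1 - p) ^ tstar ≤ 1 := by
    have h1 : (1 - p) ^ tstar ≤ 1 := pow_le_one₀ hq0.le (by linarith)
    nlinarith
  have hθ0 : (0:ℝ) ≤ 1 - p * (1 - p) ^ tstar := by linarith
  have hθ1 : 1 - p * (1 - p) ^ tstar < 1 := by linarith
  have hdiv : Tendsto (fun n : ℕ => n / (tstar + 1)) atTop atTop := by
    apply tendsto_atTop_atTop.mpr
    intro b
    refine ⟨b * (tstar + 1), fun n hn => ?_⟩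
    exact (Nat.le_div_iff_mul_le (Nat.succ_pos _)).mpr hn
  have hpow : Tendsto (fun n : ℕ => (1 - p * (1 - p) ^ tstar) ^ (n / (tstar + 1)))
      atTop (nhds 0) :=
    (tendsto_pow_atTop_nhds_zero_of_lt_one hθ0 hθ1).comp hdiv
  have hmul := hpow.mul_const (Mw tstar p 0 - mw tstar p 0)
  rw [zero_mul] at hmul
  exact squeeze_zero (fun n => by linarith [mw_le_Mw tstar p n])
    (Dw_le tstar p hp0 hp1) hmul

lemma Sfun_tendsto :
    Tendsto (Sfun tstar p) atTop (nhds (⨆ n, mw tstar p n)) := by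
  have hbdd : BddAbove (Set.range (mw tstar p)) := by
    refine ⟨Mw tstar p 0, ?_⟩
    rintro _ ⟨n, rfl⟩
    exact le_trans (mw_le_Mw tstar p n) (Mw_antitone tstar p hp0 hp1 (Nat.zero_le n))
  have hm : Tendsto (mw tstar p) atTop (nhds (⨆ n, mw tstar p n)) :=
    tendsto_atTop_ciSup (mw_monotone tstar p hp0 hp1) hbdd
  have hM : Tendsto (Mw tstar p) atTop (nhds (⨆ n, mw tstar p n)) := by
    have h := hm.add (Dw_tendsto tstar p hp0 hp1)
    rw [add_zero] at h
    exact h.congr (fun n => by ring)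
  exact tendsto_of_tendsto_of_tendsto_of_le_of_le hm hM
    (mw_le_S tstar p) (S_le_Mw tstar p)

end Conv2

section Conv3

variable (tstar : ℕ) (p : ℝ)

lemma geom_aux : ∀ t : ℕ, p * ∑ k ∈ Finset.range t, (1 - p) ^ k = 1 - (1 - p) ^ t := by
  intro t
  induction t with
  | zero => simp
  | succ t ih =>
      rw [Finset.sum_range_succ, mul_add, ih, pow_succ]
      ring

lemma W_eq_one (n : ℕ) :
    Sfun tstar p (n + tstar) + p * ∑ k ∈ Finset.range tstar, Sfun tstar p (n + k) = 1 := by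
  induction n with
  | zero =>
      have h1 : Sfun tstar p (0 + tstar) = (1 - p) ^ tstar := by
        rw [Nat.zero_add]; exact Sfun_init tstar p tstar le_rfl
      have h2 : ∑ k ∈ Finset.range tstar, Sfun tstar p (0 + k)
          = ∑ k ∈ Finset.range tstar, (1 - p) ^ k := by
        apply Finset.sum_congr rfl
        intro k hk
        rw [Finset.mem_range] at hk
        rw [Nat.zero_add]
        exact Sfun_init tstar p k (by omega)
      rw [h1, h2, geom_aux]
      ring
  | succ n ih =>
      have hrec : Sfun tstar p (n + 1 + tstar)
          = (1 - p) * Sfun tstar p (n + tstar) + p * Sfun tstar p n := by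
        rw [show n + 1 + tstar = n + tstar + 1 by ring]
        exact Sfun_rec tstar p n
      have hshift : ∑ k ∈ Finset.range tstar, Sfun tstar p (n + 1 + k)
          = ∑ k ∈ Finset.range tstar, Sfun tstar p (n + k)
            + Sfun tstar p (n + tstar) - Sfun tstar p n := by
        have h2 : ∑ k ∈ Finset.range (tstar + 1), Sfun tstar p (n + k)
            = ∑ k ∈ Finset.range tstar, Sfun tstar p (n + (k + 1)) + Sfun tstar p (n + 0) :=
          Finset.sum_range_succ' _ _
        have h3 : ∑ k ∈ Finset.range (tstar + 1), Sfun tstar p (n + k)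
            = ∑ k ∈ Finset.range tstar, Sfun tstar p (n + k) + Sfun tstar p (n + tstar) :=
          Finset.sum_range_succ _ _
        have h4 : ∑ k ∈ Finset.range tstar, Sfun tstar p (n + 1 + k)
            = ∑ k ∈ Finset.range tstar, Sfun tstar p (n + (k + 1)) := by
          apply Finset.sum_congr rfl
          intro k _
          rw [show n + 1 + k = n + (k + 1) by ring]
        rw [h4]
        simp only [Nat.add_zero] at h2
        linarith
      rw [hrec, hshift]
      linarith [ih]

end Conv3

section Conv4

variable (tstar : ℕ) (p : ℝ) (hp0 : 0 < p) (hp1 : p < 1)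
include hp0 hp1

lemma limit_id :
    (⨆ n, mw tstar p n) + p * ((tstar : ℝ) * (⨆ n, mw tstar p n)) = 1 := by
  set L := ⨆ n, mw tstar p n with hL
  have hS := Sfun_tendsto tstar p hp0 hp1
  have h1 : Tendsto (fun n => Sfun tstar p (n + tstar)) atTop (nhds L) :=
    hS.comp (tendsto_add_atTop_nat tstar)
  have h2 : Tendsto (fun n => ∑ k ∈ Finset.range tstar, Sfun tstar p (n + k))
      atTop (nhds (∑ _k ∈ Finset.range tstar, L)) :=
    tendsto_finset_sum _ (fun k _ => hS.comp (tendsto_add_atTop_nat k))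
  have h3 : Tendsto (fun n => Sfun tstar p (n + tstar)
        + p * ∑ k ∈ Finset.range tstar, Sfun tstar p (n + k))
      atTop (nhds (L + p * ∑ _k ∈ Finset.range tstar, L)) :=
    h1.add (h2.const_mul p)
  have h4 : Tendsto (fun n : ℕ => Sfun tstar p (n + tstar)
        + p * ∑ k ∈ Finset.range tstar, Sfun tstar p (n + k))
      atTop (nhds 1) := by
    apply tendsto_const_nhds.congr
    intro n
    exact (W_eq_one tstar p n).symm
  have h5 := tendsto_nhds_unique h3 h4
  rw [Finset.sum_const, Finset.card_range, nsmul_eq_mul] at h5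
  linarith [h5]

lemma Sfun_tendsto' :
    Tendsto (Sfun tstar p) atTop (nhds (1 / (1 + (tstar : ℝ) * p))) := by
  have h1 := limit_id tstar p hp0 hp1
  have hpos : (0:ℝ) < 1 + (tstar : ℝ) * p := by positivity
  have h2 : (⨆ n, mw tstar p n) = 1 / (1 + (tstar : ℝ) * p) := by
    field_simp
    nlinarith [h1]
  have := Sfun_tendsto tstar p hp0 hp1
  rwa [h2] at this

end Conv4

theorem stmt_5 (tstar : ℕ) (p : ℝ) (hp0 : 0 < p) (hp1 : p < 1) (m : ℕ) (hm : m ≤ tstar) :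
    Tendsto (fun t : ℕ =>
        ∑ x ∈ Finset.range ((t - 1) / (tstar + 1) + 1),
          ((t - (m + 1) - x * tstar).choose x : ℝ)
            * (if (m + 1) + x * (tstar + 1) ≤ t then (1 : ℝ) else 0)
            * p ^ (x + 1) * (1 - p) ^ (t - (m + 1) - x * (tstar + 1)))
      atTop (nhds (p / (1 + (tstar : ℝ) * p))) := by
  have hmain := Sfun_tendsto' tstar p hp0 hp1
  have hsub : Tendsto (fun t : ℕ => t - (m + 1)) atTop atTop :=
    tendsto_sub_atTop_nat (m + 1)
  have hcomp : Tendsto (fun t : ℕ => p * Sfun tstar p (t - (m + 1))) atTop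
      (nhds (p * (1 / (1 + (tstar : ℝ) * p)))) := (hmain.comp hsub).const_mul p
  have hval : p * (1 / (1 + (tstar : ℝ) * p)) = p / (1 + (tstar : ℝ) * p) := by ring
  rw [hval] at hcomp
  refine Tendsto.congr' ?_ hcomp
  filter_upwards [eventually_ge_atTop (m + 1)] with t ht
  have hdivle : (t - (m + 1)) / (tstar + 1) + 1 ≤ (t - 1) / (tstar + 1) + 1 := by
    have h := Nat.div_le_div_right (c := tstar + 1) (show t - (m + 1) ≤ t - 1 by omega)
    omega
  have hvanish : ∀ x ∈ Finset.range ((t - 1) / (tstar + 1) + 1),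
      x ∉ Finset.range ((t - (m + 1)) / (tstar + 1) + 1) →
      ((t - (m + 1) - x * tstar).choose x : ℝ)
          * (if (m + 1) + x * (tstar + 1) ≤ t then (1 : ℝ) else 0)
          * p ^ (x + 1) * (1 - p) ^ (t - (m + 1) - x * (tstar + 1)) = 0 := by
    intro x _ hx2
    rw [Finset.mem_range, not_lt] at hx2
    have hlt : t - (m + 1) < x * (tstar + 1) :=
      (Nat.div_lt_iff_lt_mul (show 0 < tstar + 1 by omega)).mp (by omega)
    rw [if_neg (by omega)]
    ring
  rw [← Finset.sum_subset (Finset.range_subset_range.mpr hdivle) hvanish]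
  rw [Sfun, Finset.mul_sum]
  apply Finset.sum_congr rfl
  intro x hx
  rw [Finset.mem_range] at hx
  have hxle : x * (tstar + 1) ≤ t - (m + 1) :=
    (Nat.le_div_iff_mul_le (show 0 < tstar + 1 by omega)).mp (by omega)
  rw [if_pos (by omega), pow_succ]
  ring
end

section
/- For every positive integer t and integer t⋆ ≥ 0 with t > t⋆ + 1, and every p ∈ [0,1], the following two sums add to 1: ∑_{x=0}^{⌊(t−1)/(t⋆+1)⌋} C(t−1−x·t⋆, x) · p^x · (1−p)^{t−(t⋆+1)x} + ∑_{x=0}^{⌊(t−1)/(t⋆+1)⌋} ∑_{k=1}^{t⋆+1} C(t−k−x·t⋆, x) · 1[t−k−x(t⋆+1) ≥ 0] · p^{x+1} · (1−p)^{t−k−(t⋆+1)x} = 1. -/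
open Finset

/-- Summand of the first sum. -/
private def aa (m : ℕ) (p : ℝ) (t x : ℕ) : ℝ :=
  ((t - 1 - x * m).choose x : ℝ) * p ^ x * (1 - p) ^ (t - (m + 1) * x)

/-- Summand of the second sum. -/
private def bb (m : ℕ) (p : ℝ) (t x k : ℕ) : ℝ :=
  ((t - k - x * m).choose x : ℝ) * (if k + x * (m + 1) ≤ t then (1 : ℝ) else 0)
    * p ^ (x + 1) * (1 - p) ^ (t - k - (m + 1) * x)

private def cc (m : ℕ) (p : ℝ) (t x : ℕ) : ℝ := ∑ k ∈ Finset.Icc 1 (m + 1), bb m p t x k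

private def SS (m : ℕ) (p : ℝ) (t : ℕ) : ℝ := ∑ x ∈ Finset.range t, aa m p t x
private def TT (m : ℕ) (p : ℝ) (t : ℕ) : ℝ := ∑ x ∈ Finset.range t, cc m p t x

private lemma aa_zero {m t x : ℕ} (p : ℝ) (h : t ≤ (m + 1) * x) (hx : 1 ≤ x) :
    aa m p t x = 0 := by
  have hmul : (m + 1) * x = x * m + x := by ring
  have : (t - 1 - x * m).choose x = 0 := Nat.choose_eq_zero_of_lt (by omega)
  simp [aa, this]

private lemma bb_zero {m t x k : ℕ} (p : ℝ) (h : t < k + x * (m + 1)) :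
    bb m p t x k = 0 := by
  unfold bb
  rw [if_neg (by omega)]
  ring

private lemma cc_zero {m t x : ℕ} (p : ℝ) (h : t ≤ x * (m + 1)) :
    cc m p t x = 0 := by
  refine Finset.sum_eq_zero fun k hk => bb_zero p ?_
  have := (Finset.mem_Icc.1 hk).1
  omega

private lemma x_le_mul {m x : ℕ} : x ≤ x * (m + 1) :=
  Nat.le_mul_of_pos_right x (Nat.succ_pos m)

private lemma SS_ext {m s n : ℕ} (p : ℝ) (h1 : 1 ≤ s) (h2 : s ≤ n) :
    ∑ x ∈ Finset.range n, aa m p s x = SS m p s := by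
  rw [SS]
  refine (Finset.sum_subset (Finset.range_subset_range.2 h2) fun x hx hxs => ?_).symm
  have hxge : s ≤ x := by simpa [Finset.mem_range, Nat.not_lt] using hxs
  have hx1 : 1 ≤ x := le_trans h1 hxge
  have : s ≤ (m + 1) * x := by
    have h := @x_le_mul m x
    have hcomm : (m + 1) * x = x * (m + 1) := by ring
    omega
  exact aa_zero p this hx1

private lemma TT_ext {m s n : ℕ} (p : ℝ) (h1 : 1 ≤ s) (h2 : s ≤ n) :
    ∑ x ∈ Finset.range n, cc m p s x = TT m p s := by
  rw [TT]
  refine (Finset.sum_subset (Finset.range_subset_range.2 h2) fun x hx hxs => ?_).symm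
  have hxge : s ≤ x := by simpa [Finset.mem_range, Nat.not_lt] using hxs
  have : s ≤ x * (m + 1) := le_trans hxge x_le_mul
  exact cc_zero p this

private lemma recur_a (m x t : ℕ) (p : ℝ) (ht : m + 2 ≤ t) :
    aa m p t (x + 1) = (1 - p) * aa m p (t - 1) (x + 1) + p * aa m p (t - (m + 1)) x := by
  have hm1 : (m + 1) * (x + 1) = (x + 1) * m + (x + 1) := by ring
  have hm2 : (m + 1) * x = x * m + x := by ring
  have hm3 : (x + 1) * m = x * m + m := by ring
  by_cases hc : (m + 1) * (x + 1) ≤ t - 1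
  · obtain ⟨n, hn⟩ : ∃ n, t - 2 - (x + 1) * m = n := ⟨_, rfl⟩
    have htop : t - 1 - (x + 1) * m = n + 1 := by omega
    have htop2 : t - 1 - 1 - (x + 1) * m = n := by omega
    have htop3 : t - (m + 1) - 1 - x * m = n := by omega
    obtain ⟨e, he⟩ : ∃ e, t - 1 - (m + 1) * (x + 1) = e := ⟨_, rfl⟩
    have he1 : t - (m + 1) * (x + 1) = e + 1 := by omega
    have he2 : t - (m + 1) - (m + 1) * x = e + 1 := by omega
    unfold aa
    rw [htop, htop2, htop3, he, he1, he2, Nat.choose_succ_succ]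
    push_cast
    ring
  · have hx1 : 1 ≤ x := by
      rcases Nat.eq_zero_or_pos x with hx | hx
      · subst hx; omega
      · exact hx
    rw [aa_zero p (by omega) (by omega), aa_zero p (by omega) (by omega),
      aa_zero p (by omega) hx1]
    ring

private lemma recur_b (m x t k : ℕ) (p : ℝ) (ht : m + 2 ≤ t) (hk1 : 1 ≤ k) (hk2 : k ≤ m + 1) :
    bb m p t (x + 1) k = (1 - p) * bb m p (t - 1) (x + 1) k + p * bb m p (t - (m + 1)) x k := by
  have hm1 : (x + 1) * (m + 1) = x * (m + 1) + (m + 1) := by ring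
  have hm2 : (m + 1) * (x + 1) = (m + 1) * x + (m + 1) := by ring
  have hm3 : (x + 1) * m = x * m + m := by ring
  have hm4 : (x + 1) * (m + 1) = (x + 1) * m + (x + 1) := by ring
  have hm5 : (m + 1) * (x + 1) = (x + 1) * (m + 1) := by ring
  have hm6 : (m + 1) * x = x * (m + 1) := by ring
  rcases lt_trichotomy (k + (x + 1) * (m + 1)) t with hc | hc | hc
  · obtain ⟨n, hn⟩ : ∃ n, t - k - 1 - (x + 1) * m = n := ⟨_, rfl⟩
    have htop : t - k - (x + 1) * m = n + 1 := by omega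
    have htop2 : t - 1 - k - (x + 1) * m = n := by omega
    have htop3 : t - (m + 1) - k - x * m = n := by omega
    obtain ⟨e, he⟩ : ∃ e, t - 1 - k - (m + 1) * (x + 1) = e := ⟨_, rfl⟩
    have he1 : t - k - (m + 1) * (x + 1) = e + 1 := by omega
    have he2 : t - (m + 1) - k - (m + 1) * x = e + 1 := by omega
    unfold bb
    rw [if_pos (by omega), if_pos (by omega), if_pos (by omega),
      htop, htop2, htop3, he, he1, he2, Nat.choose_succ_succ]
    push_cast
    ring
  · unfold bb
    rw [if_pos (by omega), if_neg (by omega), if_pos (by omega)]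
    have htop : t - k - (x + 1) * m = x + 1 := by omega
    have htop3 : t - (m + 1) - k - x * m = x := by omega
    have he1 : t - k - (m + 1) * (x + 1) = 0 := by omega
    have he2 : t - (m + 1) - k - (m + 1) * x = 0 := by omega
    rw [htop, htop3, he1, he2, Nat.choose_self, Nat.choose_self]
    push_cast
    ring
  · rw [bb_zero p (by omega), bb_zero p (by omega), bb_zero p (by omega)]
    ring

private lemma a0 (m t : ℕ) (p : ℝ) (ht : 1 ≤ t) :
    aa m p t 0 = (1 - p) * aa m p (t - 1) 0 := by
  unfold aa
  simp only [Nat.zero_mul, Nat.sub_zero, Nat.choose_zero_right, Nat.mul_zero, pow_zero]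
  obtain ⟨e, he⟩ : ∃ e, t = e + 1 := ⟨t - 1, by omega⟩
  subst he
  simp [pow_succ]
  ring

private lemma b0 (m t k : ℕ) (p : ℝ) (ht : m + 2 ≤ t) (hk1 : 1 ≤ k) (hk2 : k ≤ m + 1) :
    bb m p t 0 k = (1 - p) * bb m p (t - 1) 0 k := by
  unfold bb
  rw [if_pos (by omega), if_pos (by omega)]
  simp only [Nat.zero_mul, Nat.sub_zero, Nat.choose_zero_right, Nat.mul_zero]
  obtain ⟨e, he⟩ : ∃ e, t - 1 - k = e ∧ t - k = e + 1 := ⟨t - 1 - k, rfl, by omega⟩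
  rw [he.1, he.2, pow_succ]
  push_cast
  ring

private lemma recur_c (m x t : ℕ) (p : ℝ) (ht : m + 2 ≤ t) :
    cc m p t (x + 1) = (1 - p) * cc m p (t - 1) (x + 1) + p * cc m p (t - (m + 1)) x := by
  unfold cc
  rw [Finset.mul_sum, Finset.mul_sum, ← Finset.sum_add_distrib]
  refine Finset.sum_congr rfl fun k hk => ?_
  have hk' := Finset.mem_Icc.1 hk
  exact recur_b m x t k p ht hk'.1 hk'.2

private lemma c0 (m t : ℕ) (p : ℝ) (ht : m + 2 ≤ t) :
    cc m p t 0 = (1 - p) * cc m p (t - 1) 0 := by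
  unfold cc
  rw [Finset.mul_sum]
  refine Finset.sum_congr rfl fun k hk => ?_
  have hk' := Finset.mem_Icc.1 hk
  exact b0 m t k p ht hk'.1 hk'.2

private lemma geom (p : ℝ) : ∀ t : ℕ, p * ∑ k ∈ Finset.Icc 1 t, (1 - p) ^ (t - k) = 1 - (1 - p) ^ t := by
  intro t
  induction t with
  | zero => simp
  | succ n ih =>
    rw [Finset.sum_Icc_succ_top (by omega)]
    have hstep : ∑ k ∈ Finset.Icc 1 n, (1 - p) ^ (n + 1 - k)
        = (1 - p) * ∑ k ∈ Finset.Icc 1 n, (1 - p) ^ (n - k) := by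
      rw [Finset.mul_sum]
      refine Finset.sum_congr rfl fun k hk => ?_
      have hk' := Finset.mem_Icc.1 hk
      have h : n + 1 - k = (n - k) + 1 := by omega
      rw [h, pow_succ]
      ring
    rw [hstep]
    have : p * ((1 - p) * ∑ k ∈ Finset.Icc 1 n, (1 - p) ^ (n - k) + (1 - p) ^ (n + 1 - (n + 1)))
        = (1 - p) * (p * ∑ k ∈ Finset.Icc 1 n, (1 - p) ^ (n - k)) + p := by
      simp
      ring
    rw [this, ih, pow_succ]
    ring

private lemma base_case (m t : ℕ) (p : ℝ) (ht1 : 1 ≤ t) (ht2 : t ≤ m + 1) :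
    SS m p t + TT m p t = 1 := by
  have hS : SS m p t = (1 - p) ^ t := by
    rw [SS, Finset.sum_eq_single 0]
    · simp [aa]
    · intro x hx hne
      have hx1 : 1 ≤ x := by omega
      have : m + 1 ≤ (m + 1) * x := by
        calc m + 1 = (m + 1) * 1 := (mul_one _).symm
        _ ≤ (m + 1) * x := Nat.mul_le_mul_left _ hx1
      exact aa_zero p (by omega) hx1
    · intro h
      exact absurd (Finset.mem_range.2 (by omega)) h
  have hT : TT m p t = p * ∑ k ∈ Finset.Icc 1 t, (1 - p) ^ (t - k) := by
    rw [TT, Finset.sum_eq_single 0]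
    · rw [cc]
      have hsub : ∑ k ∈ Finset.Icc 1 (m + 1), bb m p t 0 k = ∑ k ∈ Finset.Icc 1 t, bb m p t 0 k := by
        refine (Finset.sum_subset (Finset.Icc_subset_Icc_right ht2) fun k hk hkt => ?_).symm
        have hk1 := (Finset.mem_Icc.1 hk).1
        have hkt' : ¬ (1 ≤ k ∧ k ≤ t) := by simpa [Finset.mem_Icc] using hkt
        exact bb_zero p (by omega)
      rw [hsub, Finset.mul_sum]
      refine Finset.sum_congr rfl fun k hk => ?_
      have hk' := Finset.mem_Icc.1 hk
      unfold bb
      rw [if_pos (by omega)]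
      simp only [Nat.zero_mul, Nat.sub_zero, Nat.choose_zero_right, Nat.mul_zero]
      push_cast
      ring
    · intro x hx hne
      have hx1 : 1 ≤ x := by omega
      have : t ≤ x * (m + 1) := by
        have := @x_le_mul m x
        calc t ≤ m + 1 := ht2
        _ ≤ x * (m + 1) := by nlinarith
      exact cc_zero p this
    · intro h
      exact absurd (Finset.mem_range.2 (by omega)) h
  rw [hS, hT, geom]
  ring

private lemma main_lemma (m : ℕ) (p : ℝ) : ∀ t : ℕ, 1 ≤ t → SS m p t + TT m p t = 1 := by
  intro t
  induction t using Nat.strong_induction_on with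
  | _ t ih =>
    intro ht
    by_cases hbase : t ≤ m + 1
    · exact base_case m t p ht hbase
    · have ht2 : m + 2 ≤ t := by omega
      obtain ⟨s, rfl⟩ : ∃ s, t = s + 1 := ⟨t - 1, by omega⟩
      have hs1 : m + 1 ≤ s := by omega
      have hS : SS m p (s + 1) = (1 - p) * SS m p s + p * SS m p (s + 1 - (m + 1)) := by
        rw [SS, Finset.sum_range_succ']
        have hterm : ∀ x ∈ Finset.range s,
            aa m p (s + 1) (x + 1)
              = (1 - p) * aa m p s (x + 1) + p * aa m p (s + 1 - (m + 1)) x := by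
          intro x hx
          have := recur_a m x (s + 1) p (by omega)
          simpa using this
        rw [Finset.sum_congr rfl hterm, Finset.sum_add_distrib]
        have h0 : aa m p (s + 1) 0 = (1 - p) * aa m p s 0 := by
          have := a0 m (s + 1) p (by omega)
          simpa using this
        have hq : ∑ x ∈ Finset.range s, (1 - p) * aa m p s (x + 1)
            = (1 - p) * ∑ x ∈ Finset.range s, aa m p s (x + 1) := by
          rw [Finset.mul_sum]
        have hp : ∑ x ∈ Finset.range s, p * aa m p (s + 1 - (m + 1)) x
            = p * ∑ x ∈ Finset.range s, aa m p (s + 1 - (m + 1)) x := by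
          rw [Finset.mul_sum]
        rw [hq, hp, h0]
        have hSq : (∑ x ∈ Finset.range s, aa m p s (x + 1)) + aa m p s 0 = SS m p s := by
          rw [← Finset.sum_range_succ']
          exact SS_ext p (by omega) (by omega)
        have hSp : ∑ x ∈ Finset.range s, aa m p (s + 1 - (m + 1)) x = SS m p (s + 1 - (m + 1)) := by
          exact SS_ext p (by omega) (by omega)
        rw [hSp]
        rw [← hSq]
        ring
      have hT : TT m p (s + 1) = (1 - p) * TT m p s + p * TT m p (s + 1 - (m + 1)) := by
        rw [TT, Finset.sum_range_succ']
        have hterm : ∀ x ∈ Finset.range s,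
            cc m p (s + 1) (x + 1)
              = (1 - p) * cc m p s (x + 1) + p * cc m p (s + 1 - (m + 1)) x := by
          intro x hx
          have := recur_c m x (s + 1) p (by omega)
          simpa using this
        rw [Finset.sum_congr rfl hterm, Finset.sum_add_distrib]
        have h0 : cc m p (s + 1) 0 = (1 - p) * cc m p s 0 := by
          have := c0 m (s + 1) p (by omega)
          simpa using this
        have hq : ∑ x ∈ Finset.range s, (1 - p) * cc m p s (x + 1)
            = (1 - p) * ∑ x ∈ Finset.range s, cc m p s (x + 1) := by
          rw [Finset.mul_sum]
        have hp : ∑ x ∈ Finset.range s, p * cc m p (s + 1 - (m + 1)) x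
            = p * ∑ x ∈ Finset.range s, cc m p (s + 1 - (m + 1)) x := by
          rw [Finset.mul_sum]
        rw [hq, hp, h0]
        have hSq : (∑ x ∈ Finset.range s, cc m p s (x + 1)) + cc m p s 0 = TT m p s := by
          rw [← Finset.sum_range_succ']
          exact TT_ext p (by omega) (by omega)
        have hSp : ∑ x ∈ Finset.range s, cc m p (s + 1 - (m + 1)) x = TT m p (s + 1 - (m + 1)) := by
          exact TT_ext p (by omega) (by omega)
        rw [hSp, ← hSq]
        ring
      have h1 := ih s (by omega) (by omega)
      have h2 := ih (s + 1 - (m + 1)) (by omega) (by omega)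
      rw [hS, hT]
      linear_combination (1 - p) * h1 + p * h2

theorem stmt_7 (t tstar : ℕ) (ht : tstar + 1 < t) (p : ℝ) (hp0 : 0 ≤ p) (hp1 : p ≤ 1) :
    (∑ x ∈ Finset.range ((t - 1) / (tstar + 1) + 1),
        ((t - 1 - x * tstar).choose x : ℝ) * p ^ x * (1 - p) ^ (t - (tstar + 1) * x))
    + (∑ x ∈ Finset.range ((t - 1) / (tstar + 1) + 1),
        ∑ k ∈ Finset.Icc 1 (tstar + 1),
          ((t - k - x * tstar).choose x : ℝ)
            * (if k + x * (tstar + 1) ≤ t then (1 : ℝ) else 0)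
            * p ^ (x + 1) * (1 - p) ^ (t - k - (tstar + 1) * x))
    = 1 := by
  have ht1 : 1 ≤ t := by omega
  have hdiv : (t - 1) / (tstar + 1) + 1 ≤ t := by
    have := Nat.div_le_self (t - 1) (tstar + 1)
    omega
  have key : ∀ x : ℕ, (t - 1) / (tstar + 1) < x → t ≤ x * (tstar + 1) := by
    intro x hx
    have := (Nat.div_lt_iff_lt_mul (show 0 < tstar + 1 by omega)).1 hx
    omega
  have h1 : (∑ x ∈ Finset.range ((t - 1) / (tstar + 1) + 1),
        ((t - 1 - x * tstar).choose x : ℝ) * p ^ x * (1 - p) ^ (t - (tstar + 1) * x))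
      = SS tstar p t := by
    rw [SS]
    refine Finset.sum_subset (Finset.range_subset_range.2 hdiv) fun x hx hxn => ?_
    have hxgt : (t - 1) / (tstar + 1) < x := by
      simp only [Finset.mem_range, Nat.not_lt] at hxn
      omega
    have hkey := key x hxgt
    have hcomm : x * (tstar + 1) = (tstar + 1) * x := Nat.mul_comm _ _
    have hx1 : 1 ≤ x := by
      rcases Nat.eq_zero_or_pos x with h0 | h0
      · subst h0; simp at hkey; omega
      · exact h0
    show aa tstar p t x = 0
    exact aa_zero p (by omega) hx1
  have h2 : (∑ x ∈ Finset.range ((t - 1) / (tstar + 1) + 1),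
        ∑ k ∈ Finset.Icc 1 (tstar + 1),
          ((t - k - x * tstar).choose x : ℝ)
            * (if k + x * (tstar + 1) ≤ t then (1 : ℝ) else 0)
            * p ^ (x + 1) * (1 - p) ^ (t - k - (tstar + 1) * x))
      = TT tstar p t := by
    rw [TT]
    refine Finset.sum_subset (Finset.range_subset_range.2 hdiv) fun x hx hxn => ?_
    have hxgt : (t - 1) / (tstar + 1) < x := by
      simp only [Finset.mem_range, Nat.not_lt] at hxn
      omega
    have hkey := key x hxgt
    show cc tstar p t x = 0
    exact cc_zero p hkey
  rw [h1, h2]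
  exact main_lemma tstar p t ht1
end
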